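/- Conversion of local minimax risk lower bounds into minimax quantile lower bounds: let Θ₀ ⊆ Θ be non-empty with diameter D := sup_{θ₁,θ₂∈Θ₀} d(θ₁,θ₂), and suppose g(D) > 0. Let Δ ∈ [0,∞) be such that inf_{θ̂∈Θ̂} sup_{θ₀∈Θ₀} sup_{P∈𝒫_{θ₀}} E_P[L(θ̂(X),θ₀)] ≥ Δ. Then for every ε > 0 and every δ ∈ (0, (Δ − g(εD))/g((1+ε)D)), we have M_−(δ) ≥ g(εD). -/

import Mathlib

open MeasureTheory ENNReal

/-- The lower minimax `(1-δ)`th quantile. -/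
noncomputable def lowerMinimaxQuantile {Θ 𝒳 : Type*} [MeasurableSpace Θ] [MeasurableSpace 𝒳]
    (Pfam : Θ → Set (Measure 𝒳)) (L : Θ → Θ → ℝ) (δ : ℝ) : ℝ≥0∞ :=
  sInf {r : ℝ≥0∞ |
    (⨅ T : {f : 𝒳 → Θ // Measurable f}, ⨆ θ : Θ, ⨆ P ∈ Pfam θ,
      P {x | r < ENNReal.ofReal (L (T.1 x) θ)}) ≤ ENNReal.ofReal δ}

/-- conversion of local minimax risk lower bounds into lower bounds on the lower
minimax quantile. -/
theorem lowerMinimaxQuantile_ge_of_local_risk_bound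
    {Θ 𝒳 : Type*} [PseudoMetricSpace Θ] [Nonempty Θ] [MeasurableSpace Θ] [BorelSpace Θ]
    [MeasurableSpace 𝒳]
    (Pfam : Θ → Set (Measure 𝒳)) (hPfam : ∀ θ, ∀ P ∈ Pfam θ, IsProbabilityMeasure P)
    (g : ℝ → ℝ) (hg : MonotoneOn g (Set.Ici 0)) (hg0 : ∀ x ∈ Set.Ici (0 : ℝ), 0 ≤ g x)
    (Θ₀ : Set Θ) (hΘ₀ : Θ₀.Nonempty)
    (D : ℝ) (hD : IsLUB {x : ℝ | ∃ θ₁ ∈ Θ₀, ∃ θ₂ ∈ Θ₀, x = dist θ₁ θ₂} D)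
    (hgD : 0 < g D)
    (Δ : ℝ) (hΔ0 : 0 ≤ Δ)
    (hΔ : ENNReal.ofReal Δ ≤
      ⨅ T : {f : 𝒳 → Θ // Measurable f}, ⨆ θ₀ ∈ Θ₀, ⨆ P ∈ Pfam θ₀,
        ∫⁻ x, ENNReal.ofReal (g (dist (T.1 x) θ₀)) ∂P) :
    ∀ ε : ℝ, 0 < ε → ∀ δ : ℝ, 0 < δ → δ < (Δ - g (ε * D)) / g ((1 + ε) * D) →
      ENNReal.ofReal (g (ε * D)) ≤
        lowerMinimaxQuantile Pfam (fun a b => g (dist a b)) δ := by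
  intro ε hε δ hδ hδlt
  classical
  obtain ⟨θs, hθs⟩ := hΘ₀
  have hD0 : 0 ≤ D := hD.1 ⟨θs, hθs, θs, hθs, (dist_self θs).symm⟩
  have hεD0 : 0 ≤ ε * D := mul_nonneg hε.le hD0
  have h1εD0 : 0 ≤ (1 + ε) * D := mul_nonneg (by linarith) hD0
  have hDle : D ≤ (1 + ε) * D := by nlinarith
  have hg1ε : 0 < g ((1 + ε) * D) :=
    lt_of_lt_of_le hgD (hg (Set.mem_Ici.2 hD0) (Set.mem_Ici.2 h1εD0) hDle)
  -- monotone measurable extension of g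
  set G : ℝ → ℝ := fun t => g (max t 0) with hG
  have hGmono : Monotone G := fun a b hab =>
    hg (Set.mem_Ici.2 (le_max_right _ _)) (Set.mem_Ici.2 (le_max_right _ _))
      (max_le_max hab le_rfl)
  have hGmeas : Measurable G := hGmono.measurable
  have hGdist : ∀ a : Θ, ∀ b : Θ, G (dist a b) = g (dist a b) := fun a b => by
    simp [hG, max_eq_left dist_nonneg]
  set B : ℝ := (Δ - g (ε * D)) / g ((1 + ε) * D) with hB
  set δ' : ℝ := (δ + B) / 2 with hδ'
  have hδ'pos : 0 < δ' := by rw [hδ']; linarith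
  have hδδ' : δ < δ' := by rw [hδ']; linarith
  have hδ'B : δ' < B := by rw [hδ']; linarith
  apply le_sInf
  rintro r hr
  by_contra hcon
  push_neg at hcon
  have hgεD_pos : 0 < g (ε * D) := by
    by_contra h
    push_neg at h
    rw [ENNReal.ofReal_eq_zero.2 h] at hcon
    exact (not_lt.2 (zero_le : 0 ≤ r)) hcon
  simp only [Set.mem_setOf_eq] at hr
  have hinf : (⨅ T : {f : 𝒳 → Θ // Measurable f}, ⨆ θ : Θ, ⨆ P ∈ Pfam θ,
      P {x | r < ENNReal.ofReal (g (dist (T.1 x) θ))}) < ENNReal.ofReal δ' :=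
    lt_of_le_of_lt hr ((ENNReal.ofReal_lt_ofReal_iff_of_nonneg hδ.le).2 hδδ')
  obtain ⟨T, hT⟩ := iInf_lt_iff.1 hinf
  -- modified estimator
  set T' : 𝒳 → Θ := fun x => if Metric.infDist (T.1 x) Θ₀ < ε * D then T.1 x else θs with hT'
  have hAmeas : MeasurableSet {x : 𝒳 | Metric.infDist (T.1 x) Θ₀ < ε * D} :=
    measurableSet_lt ((Metric.continuous_infDist_pt Θ₀).measurable.comp T.2) measurable_const
  have hT'meas : Measurable T' := Measurable.ite hAmeas T.2 measurable_const
  have hdist_bound : ∀ θ₀ ∈ Θ₀, ∀ x, dist (T' x) θ₀ ≤ (1 + ε) * D := by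
    intro θ₀ hθ₀ x
    by_cases hx : Metric.infDist (T.1 x) Θ₀ < ε * D
    · simp only [hT', if_pos hx]
      obtain ⟨θ', hθ'mem, hθ'⟩ := (Metric.infDist_lt_iff ⟨θs, hθs⟩).1 hx
      have h1 : dist θ' θ₀ ≤ D := hD.1 ⟨θ', hθ'mem, θ₀, hθ₀, rfl⟩
      calc dist (T.1 x) θ₀ ≤ dist (T.1 x) θ' + dist θ' θ₀ := dist_triangle _ _ _
        _ ≤ ε * D + D := add_le_add hθ'.le h1
        _ = (1 + ε) * D := by ring
    · simp only [hT', if_neg hx]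
      exact le_trans (hD.1 ⟨θs, hθs, θ₀, hθ₀, rfl⟩) hDle
  set c₁ : ℝ≥0∞ := ENNReal.ofReal (g (ε * D)) with hc₁
  set c₂ : ℝ≥0∞ := ENNReal.ofReal (g ((1 + ε) * D)) with hc₂
  have key : ∀ θ₀ ∈ Θ₀, ∀ P ∈ Pfam θ₀,
      ∫⁻ x, ENNReal.ofReal (g (dist (T' x) θ₀)) ∂P ≤ c₁ + c₂ * ENNReal.ofReal δ' := by
    intro θ₀ hθ₀ P hP
    haveI := hPfam θ₀ P hP
    set Bad : Set 𝒳 := {x | r < ENNReal.ofReal (g (dist (T.1 x) θ₀))} with hBadDef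
    have hBadmeas : MeasurableSet Bad := by
      have hd : Measurable fun x => dist (T.1 x) θ₀ :=
        (Continuous.dist continuous_id continuous_const).measurable.comp T.2
      have hm0 : Measurable fun x => G (dist (T.1 x) θ₀) := hGmeas.comp hd
      have heq : (fun x => G (dist (T.1 x) θ₀)) = fun x => g (dist (T.1 x) θ₀) :=
        funext fun x => hGdist _ _
      rw [heq] at hm0
      exact measurableSet_lt measurable_const (ENNReal.measurable_ofReal.comp hm0)
    have hPBad : P Bad ≤ ENNReal.ofReal δ' := by
      refine le_trans ?_ hT.le
      refine le_trans ?_ (le_iSup _ θ₀)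
      exact le_trans (le_rfl) (le_iSup₂ (f := fun (P : Measure 𝒳) (_ : P ∈ Pfam θ₀) =>
        P {x | r < ENNReal.ofReal (g (dist (T.1 x) θ₀))}) P hP)
    have hpt : ∀ x, ENNReal.ofReal (g (dist (T' x) θ₀)) ≤
        c₁ + Bad.indicator (fun _ => c₂) x := by
      intro x
      by_cases hx : x ∈ Bad
      · rw [Set.indicator_of_mem hx]
        refine le_trans ?_ le_add_self
        exact ENNReal.ofReal_le_ofReal
          (hg (Set.mem_Ici.2 dist_nonneg) (Set.mem_Ici.2 h1εD0) (hdist_bound θ₀ hθ₀ x))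
      · rw [Set.indicator_of_notMem hx, add_zero]
        have h1 : ENNReal.ofReal (g (dist (T.1 x) θ₀)) ≤ r := not_lt.1 hx
        have h2 : g (dist (T.1 x) θ₀) < g (ε * D) :=
          (ENNReal.ofReal_lt_ofReal_iff hgεD_pos).1 (lt_of_le_of_lt h1 hcon)
        have h3 : dist (T.1 x) θ₀ < ε * D := by
          by_contra h
          push_neg at h
          exact absurd (hg (Set.mem_Ici.2 hεD0) (Set.mem_Ici.2 dist_nonneg) h) (not_le.2 h2)
        have hxA : Metric.infDist (T.1 x) Θ₀ < ε * D :=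
          lt_of_le_of_lt (Metric.infDist_le_dist_of_mem hθ₀) h3
        simp only [hT', if_pos hxA]
        exact ENNReal.ofReal_le_ofReal h2.le
    calc ∫⁻ x, ENNReal.ofReal (g (dist (T' x) θ₀)) ∂P
        ≤ ∫⁻ x, (c₁ + Bad.indicator (fun _ => c₂) x) ∂P := lintegral_mono hpt
      _ = c₁ + c₂ * P Bad := by
          rw [lintegral_add_left measurable_const, lintegral_const, measure_univ, mul_one,
            lintegral_indicator_const hBadmeas]
      _ ≤ c₁ + c₂ * ENNReal.ofReal δ' := by
          exact add_le_add le_rfl (mul_le_mul_right hPBad _)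
  have hfin : ENNReal.ofReal Δ ≤ c₁ + c₂ * ENNReal.ofReal δ' := by
    refine le_trans (hΔ.trans (iInf_le _ ⟨T', hT'meas⟩)) ?_
    exact iSup₂_le fun θ₀ hθ₀ => iSup₂_le fun P hP => key θ₀ hθ₀ P hP
  have hrhs : c₁ + c₂ * ENNReal.ofReal δ' =
      ENNReal.ofReal (g (ε * D) + g ((1 + ε) * D) * δ') := by
    rw [hc₁, hc₂, ← ENNReal.ofReal_mul hg1ε.le, ← ENNReal.ofReal_add hgεD_pos.le
      (mul_nonneg hg1ε.le hδ'pos.le)]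
  rw [hrhs] at hfin
  have hreal : Δ ≤ g (ε * D) + g ((1 + ε) * D) * δ' :=
    (ENNReal.ofReal_le_ofReal_iff (by positivity)).1 hfin
  rw [hB, lt_div_iff₀ hg1ε] at hδ'B
  linarith
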